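/- arXiv:2511.06975 — 4 statements merged into one kernel-verified Lean document; each statement's English description precedes it below -/
import Mathlib

section
/- For a continuous convex function F : ℝ → ℝ and a lower semicontinuous function I : ℝ → ℝ ∪ {∞} that is not identically ∞, one has sup_{x∈ℝ} (F(x) − I(x)) = sup_{s∈ℝ} (−F*(s) + I*(s)), where F*(s) = sup_x (s·x − F(x)) and I*(s) = sup_x (s·x − I(x)) denote the Legendre–Fenchel transforms (values in the extended reals, with the convention ∞ − ∞ avoided by the stated hypotheses). -/
private lemma exists_subgrad (F : ℝ → ℝ) (hF : ConvexOn ℝ Set.univ F) (x : ℝ) :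
    ∃ s : ℝ, ∀ y, s * (y - x) + F x ≤ F y := by
  set g : ℝ → ℝ := fun y => (F y - F x) / (y - x) with hg
  have mono : ∀ ⦃a b : ℝ⦄, a ≠ x → b ≠ x → a ≤ b → g a ≤ g b := fun a b ha hb hab =>
    hF.secant_mono (Set.mem_univ x) (Set.mem_univ a) (Set.mem_univ b) ha hb hab
  have hne : (g '' Set.Ioi x).Nonempty := ⟨g (x + 1), ⟨x + 1, by simp, rfl⟩⟩
  have hbdd : BddBelow (g '' Set.Ioi x) := by
    refine ⟨g (x - 1), ?_⟩
    rintro _ ⟨y, hy, rfl⟩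
    exact mono (by simp) (ne_of_gt hy) (by simp at hy; linarith)
  refine ⟨sInf (g '' Set.Ioi x), fun y => ?_⟩
  rcases lt_trichotomy y x with h | h | h
  · have h1 : g y ≤ sInf (g '' Set.Ioi x) := by
      refine le_csInf hne ?_
      rintro _ ⟨z, hz, rfl⟩
      exact mono h.ne (ne_of_gt hz) (le_of_lt (h.trans hz))
    rw [hg] at h1
    simp only at h1
    rw [div_le_iff_of_neg (by linarith : y - x < 0)] at h1
    linarith
  · simp [h]
  · have h1 : sInf (g '' Set.Ioi x) ≤ g y := csInf_le hbdd ⟨y, h, rfl⟩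
    rw [hg] at h1
    simp only at h1
    rw [le_div_iff₀ (by linarith : (0:ℝ) < y - x)] at h1
    linarith

private lemma coe_add_iSup_le {ι : Sort*} (c : ℝ) (g : ι → EReal) (T : EReal)
    (h : ∀ i, (c : EReal) + g i ≤ T) : (c : EReal) + ⨆ i, g i ≤ T := by
  rw [add_comm]
  refine EReal.add_le_of_le_sub (iSup_le fun i => ?_)
  rw [EReal.le_sub_iff_add_le (Or.inl (EReal.coe_ne_bot c)) (Or.inl (EReal.coe_ne_top c)),
    add_comm]
  exact h i

/-- Bogoliubov's variational principle, convex case: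
`sup_x (F x − I x) = sup_s (−F*(s) + I*(s))` in the extended reals. -/
theorem stmt_0 (F : ℝ → ℝ) (hFc : Continuous F) (hFconv : ConvexOn ℝ Set.univ F)
    (I : ℝ → EReal) (hIlsc : LowerSemicontinuous I) (hIbot : ∀ x, I x ≠ ⊥)
    (hItop : ∃ x, I x ≠ ⊤) :
    (⨆ x : ℝ, ((F x : EReal) - I x)) =
      ⨆ s : ℝ, (-(⨆ x : ℝ, ((s * x - F x : ℝ) : EReal)) +
        ⨆ x : ℝ, (((s * x : ℝ) : EReal) - I x)) := by
  apply le_antisymm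
  · refine iSup_le fun x => ?_
    by_cases hx : I x = ⊤
    · rw [hx, EReal.sub_top]; exact bot_le
    · obtain ⟨r, hr⟩ : ∃ r : ℝ, I x = (r : EReal) :=
        ⟨(I x).toReal, (EReal.coe_toReal hx (hIbot x)).symm⟩
      obtain ⟨s, hs⟩ := exists_subgrad F hFconv x
      refine le_trans ?_ (le_iSup _ s)
      have hFs : (⨆ y : ℝ, ((s * y - F y : ℝ) : EReal)) = ((s * x - F x : ℝ) : EReal) := by
        refine le_antisymm (iSup_le fun y => ?_) (le_iSup (fun y : ℝ => ((s * y - F y : ℝ) : EReal)) x)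
        exact EReal.coe_le_coe_iff.2 (by have := hs y; linarith)
      rw [hFs, hr]
      have h1 : (((s * x : ℝ) : EReal) - (r : EReal)) ≤
          ⨆ y : ℝ, (((s * y : ℝ) : EReal) - I y) := by
        refine le_trans (le_of_eq ?_) (le_iSup (fun y : ℝ => (((s * y : ℝ) : EReal) - I y)) x)
        rw [hr]
      have h2 : -(((s * x - F x : ℝ)) : EReal) = ((F x - s * x : ℝ) : EReal) := by
        norm_cast; ring
      rw [h2]
      refine le_trans (le_of_eq ?_) (add_le_add le_rfl h1)
      norm_cast
      ring
  · refine iSup_le fun s => ?_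
    set Fs := ⨆ y : ℝ, ((s * y - F y : ℝ) : EReal) with hFsdef
    by_cases htop : Fs = ⊤
    · rw [htop]
      simp only [EReal.neg_top, EReal.bot_add]
      exact bot_le
    · have hbot : Fs ≠ ⊥ :=
        ((EReal.bot_lt_coe _).trans_le
          (le_iSup (fun y : ℝ => ((s * y - F y : ℝ) : EReal)) 0)).ne'
      obtain ⟨c, hc⟩ : ∃ c : ℝ, Fs = (c : EReal) :=
        ⟨Fs.toReal, (EReal.coe_toReal htop hbot).symm⟩
      have hcge : ∀ y : ℝ, s * y - F y ≤ c := fun y =>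
        EReal.coe_le_coe_iff.1
          (hc ▸ le_iSup (fun y : ℝ => ((s * y - F y : ℝ) : EReal)) y)
      rw [hc, show -((c : ℝ) : EReal) = ((-c : ℝ) : EReal) from (EReal.coe_neg c).symm]
      refine coe_add_iSup_le (-c) _ _ fun y => ?_
      refine le_trans ?_ (le_iSup (fun x : ℝ => ((F x : EReal) - I x)) y)
      by_cases hy : I y = ⊤
      · rw [hy]
        simp [EReal.sub_top, EReal.add_bot]
      · obtain ⟨r, hr⟩ : ∃ r : ℝ, I y = (r : EReal) :=
          ⟨(I y).toReal, (EReal.coe_toReal hy (hIbot y)).symm⟩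
        rw [hr]
        norm_cast
        linarith [hcge y]
end

section
/- Let u > 0, β > 0 with βu² > 1, and φ(t) = −(β/2)t² + log(cosh(βtu)). Then sup_{t∈ℝ} φ(t) is attained, is strictly positive, and every maximizer t₀ satisfies the self-consistency equation t₀ = u·tanh(βt₀u); moreover the set of maximizers is {t₀, −t₀} for a unique t₀ > 0. -/
open Real Set

private lemma myHasDerivAt_tanh (x : ℝ) :
    HasDerivAt Real.tanh (1 / Real.cosh x ^ 2) x := by
  have h := (Real.hasDerivAt_sinh x).div (Real.hasDerivAt_cosh x) (Real.cosh_pos x).ne'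
  have heq : Real.tanh = fun y => Real.sinh y / Real.cosh y :=
    funext fun y => Real.tanh_eq_sinh_div_cosh y
  rw [heq]
  refine h.congr_deriv ?_
  rw [← Real.cosh_sq_sub_sinh_sq x]; ring

private lemma myCosh_lb (x : ℝ) : 1 + x ^ 2 / 2 ≤ Real.cosh x := by
  have h1 : Real.cosh x = 1 + 2 * Real.sinh (x / 2) ^ 2 := by
    have h := Real.cosh_two_mul (x / 2)
    rw [show 2 * (x / 2) = x by ring] at h
    rw [h, Real.cosh_sq]; ring
  have h2 : |x / 2| ≤ |Real.sinh (x / 2)| := by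
    rw [Real.abs_sinh]
    rcases eq_or_ne (x / 2) 0 with hz | hz
    · simp [hz]
    · exact (Real.self_lt_sinh_iff.2 (abs_pos.2 hz)).le
  have h3 : (x / 2) ^ 2 ≤ Real.sinh (x / 2) ^ 2 := by
    rw [← sq_abs (x / 2), ← sq_abs (Real.sinh (x / 2))]
    exact pow_le_pow_left₀ (abs_nonneg _) h2 2
  nlinarith

private lemma myTanhAnti : StrictAntiOn (fun x => Real.tanh x / x) (Set.Ioi 0) := by
  have hd : ∀ x ∈ Set.Ioi (0:ℝ), HasDerivAt (fun x => Real.tanh x / x)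
      ((1 / Real.cosh x ^ 2 * x - Real.tanh x * 1) / x ^ 2) x := fun x hx =>
    (myHasDerivAt_tanh x).div (hasDerivAt_id x) (ne_of_gt hx)
  apply strictAntiOn_of_deriv_neg (convex_Ioi 0)
  · exact fun x hx => ((hd x hx).continuousAt).continuousWithinAt
  · intro x hx
    rw [interior_Ioi] at hx
    rw [(hd x hx).deriv]
    have hc := Real.cosh_pos x
    have h1 : x < Real.sinh x * Real.cosh x := by
      have hs : x < Real.sinh x := Real.self_lt_sinh_iff.2 hx
      nlinarith [Real.one_le_cosh x, Real.sinh_pos_iff.2 hx]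
    have h2 : 1 / Real.cosh x ^ 2 * x - Real.tanh x * 1
        = (x - Real.sinh x * Real.cosh x) / Real.cosh x ^ 2 := by
      rw [Real.tanh_eq_sinh_div_cosh]; field_simp
    have hx0 : (0:ℝ) < x := hx
    rw [h2]
    have hnum : (x - Real.sinh x * Real.cosh x) / Real.cosh x ^ 2 < 0 :=
      div_neg_of_neg_of_pos (by linarith) (by positivity)
    exact div_neg_of_neg_of_pos hnum (pow_pos hx0 2)

private lemma myFixedUniq (u β : ℝ) (hu : 0 < u) (hβ : 0 < β) :
    ∀ a b : ℝ, 0 < a → 0 < b → a = u * Real.tanh (β * a * u) →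
      b = u * Real.tanh (β * b * u) → a = b := by
  have key : ∀ a : ℝ, 0 < a → a = u * Real.tanh (β * a * u) →
      Real.tanh (β * a * u) / (β * a * u) = 1 / (β * u ^ 2) := by
    intro a ha hfa
    have h1 : Real.tanh (β * a * u) = a / u := by
      field_simp at hfa ⊢; linarith
    rw [h1]; field_simp
  intro a b ha hb hfa hfb
  by_contra hne
  rcases lt_or_gt_of_ne hne with hab | hab
  · have hlt : β * a * u < β * b * u :=
      mul_lt_mul_of_pos_right (mul_lt_mul_of_pos_left hab hβ) hu
    have := myTanhAnti (by simp only [Set.mem_Ioi]; positivity)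
      (by simp only [Set.mem_Ioi]; positivity) hlt
    have h5 : Real.tanh (β * b * u) / (β * b * u)
        < Real.tanh (β * a * u) / (β * a * u) := this
    rw [key a ha hfa, key b hb hfb] at h5
    exact lt_irrefl _ h5
  · have hlt : β * b * u < β * a * u :=
      mul_lt_mul_of_pos_right (mul_lt_mul_of_pos_left hab hβ) hu
    have := myTanhAnti (by simp only [Set.mem_Ioi]; positivity)
      (by simp only [Set.mem_Ioi]; positivity) hlt
    have h5 : Real.tanh (β * a * u) / (β * a * u)
        < Real.tanh (β * b * u) / (β * b * u) := this
    rw [key a ha hfa, key b hb hfb] at h5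
    exact lt_irrefl _ h5

/-- For `β u² > 1` the supremum of `φ t = −(β/2)t² + log cosh (β t u)` is attained,
strictly positive, maximizers satisfy the self-consistency equation, and the set of
maximizers is `{t₀, −t₀}` for a unique `t₀ > 0`. -/
theorem stmt_7 (u β : ℝ) (hu : 0 < u) (hβ : 0 < β) (h : 1 < β * u ^ 2) :
    let φ : ℝ → ℝ := fun t => -(β / 2) * t ^ 2 + Real.log (Real.cosh (β * t * u))
    ∃ t₀ : ℝ, 0 < t₀ ∧ 0 < φ t₀ ∧
      {t : ℝ | ∀ s : ℝ, φ s ≤ φ t} = {t₀, -t₀} ∧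
      (∀ t : ℝ, (∀ s : ℝ, φ s ≤ φ t) → t = u * Real.tanh (β * t * u)) ∧
      ∀ t₁ : ℝ, 0 < t₁ → {t : ℝ | ∀ s : ℝ, φ s ≤ φ t} = {t₁, -t₁} → t₁ = t₀ := by
  intro φ
  have hφ0 : φ 0 = 0 := by simp [φ]
  have hφeven : ∀ t, φ (-t) = φ t := by
    intro t
    show -(β/2) * (-t)^2 + Real.log (Real.cosh (β * (-t) * u)) = _
    rw [show β * (-t) * u = -(β * t * u) by ring, Real.cosh_neg,
      show ((-t:ℝ)) ^ 2 = t ^ 2 by ring]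
  -- derivative of φ
  have hderiv : ∀ t : ℝ, HasDerivAt φ (-β * t + β * u * Real.tanh (β * t * u)) t := by
    intro t
    have h1 : HasDerivAt (fun t : ℝ => -(β / 2) * t ^ 2) (-(β / 2) * (2 * t ^ 1)) t :=
      (hasDerivAt_pow 2 t).const_mul _
    have hg : HasDerivAt (fun t : ℝ => β * t * u) (β * u) t := by
      have := ((hasDerivAt_id t).const_mul β).mul_const u
      simpa using this
    have hc : HasDerivAt (fun t : ℝ => Real.cosh (β * t * u))
        (Real.sinh (β * t * u) * (β * u)) t := (Real.hasDerivAt_cosh _).comp t hg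
    have hl : HasDerivAt (fun t : ℝ => Real.log (Real.cosh (β * t * u)))
        ((Real.sinh (β * t * u) * (β * u)) / Real.cosh (β * t * u)) t :=
      hc.log (Real.cosh_pos _).ne'
    have := h1.add hl
    refine this.congr_deriv ?_
    rw [Real.tanh_eq_sinh_div_cosh]
    have hcp := (Real.cosh_pos (β * t * u)).ne'
    field_simp
  -- continuity of φ
  have hcont : Continuous φ := by
    apply Continuous.add
    · exact (continuous_const.mul (continuous_pow 2))
    · exact (Real.continuous_cosh.comp
        ((continuous_const.mul continuous_id).mul continuous_const)).log
        fun x => (Real.cosh_pos _).ne'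
  -- upper bound: φ t ≤ -(β/2) t² + β u |t|
  have hub : ∀ t : ℝ, φ t ≤ -(β / 2) * t ^ 2 + β * u * |t| := by
    intro t
    have h1 : Real.cosh (β * t * u) ≤ Real.exp |β * t * u| := by
      rw [Real.cosh_eq]
      have e1 : Real.exp (β * t * u) ≤ Real.exp |β * t * u| :=
        Real.exp_le_exp.2 (le_abs_self _)
      have e2 : Real.exp (-(β * t * u)) ≤ Real.exp |β * t * u| :=
        Real.exp_le_exp.2 (neg_le_abs _)
      linarith
    have h2 : Real.log (Real.cosh (β * t * u)) ≤ |β * t * u| := by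
      calc Real.log (Real.cosh (β * t * u)) ≤ Real.log (Real.exp |β * t * u|) :=
            Real.log_le_log (Real.cosh_pos _) h1
        _ = |β * t * u| := Real.log_exp _
    have h3 : |β * t * u| = β * u * |t| := by
      rw [abs_mul, abs_mul, abs_of_pos hβ, abs_of_pos hu]; ring
    rw [h3] at h2
    show -(β / 2) * t ^ 2 + Real.log (Real.cosh (β * t * u)) ≤ _
    linarith
  -- positivity at a small point
  obtain ⟨ε, hε, hφε⟩ : ∃ ε : ℝ, 0 < ε ∧ 0 < φ ε := by
    set c : ℝ := β ^ 2 * u ^ 2 / 2 with hc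
    set b : ℝ := β / 2 with hb
    have hcb : b < c := by
      have : β < β ^ 2 * u ^ 2 := by nlinarith
      simp only [hc, hb]; linarith
    have hbpos : 0 < b := by positivity
    have hcpos : 0 < c := by positivity
    set δ : ℝ := min (1 / β) ((c - b) / (c * b)) with hδdef
    have hδ : 0 < δ := lt_min (by positivity) (div_pos (by linarith) (by positivity))
    refine ⟨Real.sqrt δ, Real.sqrt_pos.2 hδ, ?_⟩
    set t : ℝ := Real.sqrt δ with ht
    have ht2 : t ^ 2 = δ := Real.sq_sqrt hδ.le
    have hz1 : b * t ^ 2 < 1 := by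
      have : t ^ 2 ≤ 1 / β := ht2 ▸ min_le_left _ _
      calc b * t ^ 2 ≤ b * (1 / β) := by nlinarith
        _ = 1 / 2 := by rw [hb]; field_simp
        _ < 1 := by norm_num
    have hz2 : c * b * t ^ 2 ≤ c - b := by
      have h1 : t ^ 2 ≤ (c - b) / (c * b) := ht2 ▸ min_le_right _ _
      have h2 : c * b * t ^ 2 ≤ c * b * ((c - b) / (c * b)) :=
        mul_le_mul_of_nonneg_left h1 (by positivity)
      rwa [mul_div_cancel₀ _ (by positivity : c * b ≠ 0)] at h2
    -- exp (b t²) < 1 / (1 - b t²)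
    have hzpos : 0 < b * t ^ 2 := by positivity
    have he : Real.exp (b * t ^ 2) < 1 / (1 - b * t ^ 2) := by
      have h1 : 1 - b * t ^ 2 < Real.exp (-(b * t ^ 2)) := by
        have := Real.add_one_lt_exp (x := -(b * t ^ 2)) (by linarith)
        linarith
      have h2 : 0 < 1 - b * t ^ 2 := by linarith
      rw [Real.exp_neg] at h1
      rw [lt_div_iff₀ h2]
      calc Real.exp (b * t ^ 2) * (1 - b * t ^ 2)
          < Real.exp (b * t ^ 2) * (Real.exp (b * t ^ 2))⁻¹ := by
            apply mul_lt_mul_of_pos_left h1 (Real.exp_pos _)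
        _ = 1 := mul_inv_cancel₀ (Real.exp_pos _).ne'
    have h1c : 1 / (1 - b * t ^ 2) ≤ 1 + c * t ^ 2 := by
      rw [div_le_iff₀ (by linarith)]
      nlinarith
    have hcosh : 1 + c * t ^ 2 ≤ Real.cosh (β * t * u) := by
      have := myCosh_lb (β * t * u)
      have heq : 1 + (β * t * u) ^ 2 / 2 = 1 + c * t ^ 2 := by rw [hc]; ring
      linarith [heq ▸ this]
    have hlt : Real.exp (b * t ^ 2) < Real.cosh (β * t * u) := by linarith
    have hlog : b * t ^ 2 < Real.log (Real.cosh (β * t * u)) := by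
      have := Real.log_lt_log (Real.exp_pos _) hlt
      rwa [Real.log_exp] at this
    show 0 < -(β / 2) * t ^ 2 + Real.log (Real.cosh (β * t * u))
    rw [hb] at hlog; linarith
  -- existence of a global maximizer
  set R : ℝ := 2 * u + ε with hR
  have hout : ∀ s : ℝ, R < |s| → φ s < 0 := by
    intro s hs
    have habs : 2 * u < |s| := by linarith [hε]
    have := hub s
    have h0 : 0 < |s| := lt_trans (by positivity) habs
    have h2 : -(β / 2) * s ^ 2 + β * u * |s| < 0 := by
      have hsq : s ^ 2 = |s| ^ 2 := (sq_abs s).symm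
      nlinarith [mul_pos (mul_pos hβ h0) (sub_pos.2 habs)]
    exact lt_of_le_of_lt this h2
  obtain ⟨t', ht'mem, ht'max⟩ := (isCompact_Icc (a := -R) (b := R)).exists_isMaxOn
    ⟨0, by rw [Set.mem_Icc]; constructor <;> linarith⟩ hcont.continuousOn
  have hεmem : ε ∈ Set.Icc (-R) R := by
    rw [Set.mem_Icc]; constructor <;> linarith
  have ht'glob : ∀ s : ℝ, φ s ≤ φ t' := by
    intro s
    rcases le_or_gt |s| R with hs | hs
    · exact ht'max (abs_le.1 hs)
    · have := hout s hs
      have h2 : φ ε ≤ φ t' := ht'max hεmem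
      linarith
  have hφt' : 0 < φ t' := lt_of_lt_of_le hφε (ht'max hεmem)
  -- every global maximizer satisfies the self-consistency equation
  have hsc : ∀ t : ℝ, (∀ s : ℝ, φ s ≤ φ t) → t = u * Real.tanh (β * t * u) := by
    intro t hmax
    have hloc : IsLocalMax φ t := Filter.Eventually.of_forall hmax
    have hz := hloc.hasDerivAt_eq_zero (hderiv t)
    have : β * t = β * (u * Real.tanh (β * t * u)) := by linarith [hz]
    exact mul_left_cancel₀ hβ.ne' this
  -- maximizers are nonzero
  have hne0 : ∀ t : ℝ, (∀ s : ℝ, φ s ≤ φ t) → t ≠ 0 := by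
    intro t hmax ht0
    have := hmax t'
    rw [ht0, hφ0] at this
    linarith
  -- maximizer of opposite sign
  have hneg : ∀ t : ℝ, (∀ s : ℝ, φ s ≤ φ t) → (∀ s : ℝ, φ s ≤ φ (-t)) := by
    intro t hmax s
    rw [hφeven t]; exact hmax s
  -- define t₀
  set t₀ : ℝ := |t'| with ht₀
  have ht₀pos : 0 < t₀ := abs_pos.2 (hne0 t' ht'glob)
  have ht₀max : ∀ s : ℝ, φ s ≤ φ t₀ := by
    rcases abs_choice t' with hc | hc
    · rw [ht₀, hc]; exact ht'glob
    · rw [ht₀, hc]; exact hneg t' ht'glob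
  have ht₀fix : t₀ = u * Real.tanh (β * t₀ * u) := hsc t₀ ht₀max
  -- positive maximizers equal t₀
  have hposuniq : ∀ t : ℝ, 0 < t → (∀ s : ℝ, φ s ≤ φ t) → t = t₀ := by
    intro t ht hmax
    exact myFixedUniq u β hu hβ t t₀ ht ht₀pos (hsc t hmax) ht₀fix
  have hset : {t : ℝ | ∀ s : ℝ, φ s ≤ φ t} = {t₀, -t₀} := by
    ext s
    simp only [Set.mem_setOf_eq, Set.mem_insert_iff, Set.mem_singleton_iff]
    constructor
    · intro hmax
      rcases lt_trichotomy s 0 with hs | hs | hs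
      · right
        have h1 : -s = t₀ := hposuniq (-s) (by linarith) (hneg s hmax)
        linarith
      · exact absurd hs (hne0 s hmax)
      · exact Or.inl (hposuniq s hs hmax)
    · rintro (rfl | rfl)
      · exact ht₀max
      · exact hneg t₀ ht₀max
  refine ⟨t₀, ht₀pos, lt_of_lt_of_le hφt' (ht₀max t'), hset, hsc, ?_⟩
  intro t₁ ht₁ hseteq
  have : t₁ ∈ {t : ℝ | ∀ s : ℝ, φ s ≤ φ t} := by
    rw [hseteq]; left; rfl
  exact hposuniq t₁ ht₁ this
end

section
/- Sion's minimax theorem (one-dimensional real case): Let K ⊆ ℝ be a compact interval, C ⊆ ℝ an interval, and f : K × C → ℝ such that for each y ∈ C, x ↦ f(x,y) is convex and lower semicontinuous on K, and for each x ∈ K, y ↦ f(x,y) is concave and upper semicontinuous on C. Then min_{x∈K} sup_{y∈C} f(x,y) = sup_{y∈C} min_{x∈K} f(x,y). -/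
open Set Filter Topology

lemma sion_sublevel_closed {s : Set ℝ} (hs : IsClosed s) {φ : ℝ → ℝ}
    (hφ : LowerSemicontinuousOn φ s) (c : ℝ) : IsClosed {x ∈ s | φ x ≤ c} := by
  refine isClosed_of_closure_subset fun x hx => ?_
  have hxs : x ∈ s := hs.closure_subset (closure_mono (sep_subset _ _) hx)
  refine ⟨hxs, ?_⟩
  by_contra hlt
  push_neg at hlt
  have ev : ∀ᶠ z in 𝓝[s] x, c < φ z := hφ x hxs c hlt
  have hne : (𝓝[{x ∈ s | φ x ≤ c}] x).NeBot := mem_closure_iff_nhdsWithin_neBot.1 hx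
  have ev' : ∀ᶠ z in 𝓝[{x ∈ s | φ x ≤ c}] x, c < φ z :=
    ev.filter_mono (nhdsWithin_mono x fun z hz => hz.1)
  obtain ⟨z, hz1, hz2⟩ := (ev'.and eventually_mem_nhdsWithin).exists
  exact absurd hz2.2 (not_le.2 hz1)

lemma sion_lsc_attains {s : Set ℝ} (hsc : IsCompact s) (hne : s.Nonempty) {φ : ℝ → ℝ}
    (hφ : LowerSemicontinuousOn φ s) : ∃ x ∈ s, ∀ z ∈ s, φ x ≤ φ z := by
  by_contra h
  push_neg at h
  haveI : Nonempty s := hne.to_subtype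
  set t : s → Set ℝ := fun z => {x ∈ s | φ x ≤ φ z} with ht
  have htc : ∀ z, IsCompact (t z) := fun z =>
    hsc.of_isClosed_subset (sion_sublevel_closed hsc.isClosed hφ _) (sep_subset _ _)
  have hint : (⋂ z, t z).Nonempty := by
    refine IsCompact.nonempty_iInter_of_directed_nonempty_isCompact_isClosed t ?_
      (fun z => ⟨z, z.2, le_rfl⟩) htc
      (fun z => sion_sublevel_closed hsc.isClosed hφ _)
    intro z₁ z₂
    rcases le_total (φ z₁) (φ z₂) with hle | hle
    · exact ⟨z₁, fun x hx => ⟨hx.1, hx.2⟩, fun x hx => ⟨hx.1, hx.2.trans hle⟩⟩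
    · exact ⟨z₂, fun x hx => ⟨hx.1, hx.2.trans hle⟩, fun x hx => ⟨hx.1, hx.2⟩⟩
  obtain ⟨x, hx⟩ := hint
  have hxs : x ∈ s := (mem_iInter.1 hx Classical.ofNonempty).1
  obtain ⟨z, hzs, hz⟩ := h x hxs
  exact absurd (mem_iInter.1 hx ⟨z, hzs⟩).2 (not_le.2 hz)

lemma sion_lsc_max {s : Set ℝ} {φ ψ : ℝ → ℝ} (hφ : LowerSemicontinuousOn φ s)
    (hψ : LowerSemicontinuousOn ψ s) :
    LowerSemicontinuousOn (fun x => max (φ x) (ψ x)) s := by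
  intro x hx y hy
  rcases lt_max_iff.1 hy with h | h
  · exact (hφ x hx y h).mono fun z hz => hz.trans_le (le_max_left _ _)
  · exact (hψ x hx y h).mono fun z hz => hz.trans_le (le_max_right _ _)

lemma sion_lsc_foldr {s : Set ℝ} (f : ℝ → ℝ → ℝ) (l : List ℝ) (c : ℝ)
    (h : ∀ y ∈ l, LowerSemicontinuousOn (fun x => f x y) s) :
    LowerSemicontinuousOn (fun x => ((l.map (f x)).foldr max c)) s := by
  induction l with
  | nil => simpa using lowerSemicontinuousOn_const
  | cons z l ih =>
    simp only [List.map_cons, List.foldr_cons]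
    exact sion_lsc_max (h z (by simp)) (ih fun y hy => h y (List.mem_cons_of_mem _ hy))

lemma sion_lt_foldr {g : ℝ → ℝ} {l : List ℝ} {c c' : ℝ} :
    c' < (l.map g).foldr max c ↔ c' < c ∨ ∃ y ∈ l, c' < g y := by
  induction l with
  | nil => simp
  | cons z l ih =>
    simp only [List.map_cons, List.foldr_cons, lt_max_iff, ih, List.mem_cons]
    constructor
    · rintro (h | h | ⟨y, hy, h⟩)
      · exact Or.inr ⟨z, Or.inl rfl, h⟩
      · exact Or.inl h
      · exact Or.inr ⟨y, Or.inr hy, h⟩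
    · rintro (h | ⟨y, rfl | hy, h⟩)
      · exact Or.inr (Or.inl h)
      · exact Or.inl h
      · exact Or.inr (Or.inr ⟨y, hy, h⟩)

lemma sion_lem1 (a b : ℝ) (C : Set ℝ) (hC : Convex ℝ C) (f : ℝ → ℝ → ℝ)
    (hconv : ∀ y ∈ C, ConvexOn ℝ (Set.Icc a b) (fun x => f x y))
    (hlsc : ∀ y ∈ C, LowerSemicontinuousOn (fun x => f x y) (Set.Icc a b))
    (hconc : ∀ x ∈ Set.Icc a b, ConcaveOn ℝ C (f x))
    (husc : ∀ x ∈ Set.Icc a b, UpperSemicontinuousOn (f x) C)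
    (a' b' : ℝ) (ha' : a ≤ a') (hb' : b' ≤ b) (hab' : a' ≤ b')
    (y₁ y₂ : ℝ) (hy₁ : y₁ ∈ C) (hy₂ : y₂ ∈ C) (c c' : ℝ) (hcc : c < c')
    (hbig : ∀ x ∈ Icc a' b', c' < max (f x y₁) (f x y₂)) :
    ∃ y ∈ C, ∀ x ∈ Icc a' b', c < f x y := by
  by_contra hcon
  push_neg at hcon
  have hKsub : Icc a' b' ⊆ Icc a b := Icc_subset_Icc ha' hb'
  set Y : ℝ → ℝ := fun t => (1 - t) * y₁ + t * y₂ with hY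
  have hYC : ∀ t ∈ Icc (0:ℝ) 1, Y t ∈ C := by
    intro t ht
    have := hC hy₁ hy₂ (show (0:ℝ) ≤ 1 - t by linarith [ht.2]) ht.1 (by ring)
    simpa [smul_eq_mul] using this
  set A : ℝ → Set ℝ := fun t => {x ∈ Icc a' b' | f x (Y t) ≤ c} with hA
  set B : ℝ → Set ℝ := fun t => {x ∈ Icc a' b' | f x (Y t) ≤ c'} with hB
  have hY0 : Y 0 = y₁ := by simp [hY]
  have hY1 : Y 1 = y₂ := by simp [hY]
  have hAne : ∀ t ∈ Icc (0:ℝ) 1, (A t).Nonempty := by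
    intro t ht
    obtain ⟨x, hx, hfx⟩ := hcon (Y t) (hYC t ht)
    exact ⟨x, hx, hfx⟩
  have hAB : ∀ t, A t ⊆ B t := fun t x hx => ⟨hx.1, hx.2.trans hcc.le⟩
  have hBcl : ∀ t ∈ Icc (0:ℝ) 1, IsClosed (B t) := fun t ht =>
    sion_sublevel_closed isClosed_Icc ((hlsc _ (hYC t ht)).mono hKsub) c'
  have hBcpt : ∀ t ∈ Icc (0:ℝ) 1, IsCompact (B t) := fun t ht =>
    isCompact_Icc.of_isClosed_subset (hBcl t ht) (sep_subset _ _)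
  have hBcv : ∀ t ∈ Icc (0:ℝ) 1, Convex ℝ (B t) := fun t ht =>
    ((hconv _ (hYC t ht)).subset hKsub (convex_Icc _ _)).convex_le c'
  have hB01 : Disjoint (B 0) (B 1) := by
    rw [Set.disjoint_left]
    rintro x ⟨hx, h0⟩ ⟨-, h1⟩
    rw [hY0] at h0; rw [hY1] at h1
    exact absurd (max_le h0 h1) (not_le.2 (hbig x hx))
  have hBsub : ∀ t ∈ Icc (0:ℝ) 1, B t ⊆ B 0 ∪ B 1 := by
    intro t ht x hx
    have hcnc : (1 - t) * f x y₁ + t * f x y₂ ≤ f x ((1 - t) * y₁ + t * y₂) := by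
      have h := (hconc x (hKsub hx.1)).2 hy₁ hy₂ (show (0:ℝ) ≤ 1 - t by linarith [ht.2])
        ht.1 (by ring)
      simpa [smul_eq_mul] using h
    have hfx : f x ((1 - t) * y₁ + t * y₂) ≤ c' := hx.2
    rcases le_total (f x y₁) (f x y₂) with hle | hle
    · left
      refine ⟨hx.1, ?_⟩
      rw [hY0]
      nlinarith [ht.1, ht.2, mul_nonneg ht.1 (sub_nonneg.2 hle)]
    · right
      refine ⟨hx.1, ?_⟩
      rw [hY1]
      nlinarith [ht.1, ht.2, mul_nonneg (by linarith [ht.2] : (0:ℝ) ≤ 1 - t) (sub_nonneg.2 hle)]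
  obtain ⟨U, V, hUo, hVo, hB0U, hB1V, hUV⟩ :=
    SeparatedNhds.of_isCompact_isCompact (hBcpt 0 (by norm_num)) (hBcpt 1 (by norm_num)) hB01
  have hBor : ∀ t ∈ Icc (0:ℝ) 1, B t ⊆ B 0 ∨ B t ⊆ B 1 := by
    intro t ht
    have hsub : B t ⊆ U ∪ V := fun x hx => (hBsub t ht hx).elim (fun h => Or.inl (hB0U h))
      (fun h => Or.inr (hB1V h))
    have hpc : IsPreconnected (B t) := (hBcv t ht).isPreconnected
    by_cases hne : (B t ∩ U).Nonempty
    · left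
      have hBtU : B t ⊆ U := hpc.subset_left_of_subset_union hUo hVo hUV hsub hne
      intro x hx
      rcases hBsub t ht hx with h | h
      · exact h
      · exact absurd (hB1V h) (fun hv => Set.disjoint_left.1 hUV (hBtU hx) hv)
    · right
      intro x hx
      rcases hBsub t ht hx with h | h
      · exact absurd ⟨hx, hB0U h⟩ (fun hh => hne ⟨x, hh⟩)
      · exact h
  set I : Set ℝ := {t ∈ Icc (0:ℝ) 1 | A t ⊆ B 0} with hI
  set J : Set ℝ := {t ∈ Icc (0:ℝ) 1 | A t ⊆ B 1} with hJ
  have hIJcover : ∀ t ∈ Icc (0:ℝ) 1, t ∈ I ∪ J := by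
    intro t ht
    rcases hBor t ht with h | h
    · exact Or.inl ⟨ht, (hAB t).trans h⟩
    · exact Or.inr ⟨ht, (hAB t).trans h⟩
  have hIJdisj : ∀ t, t ∈ I → t ∈ J → False := by
    intro t htI htJ
    obtain ⟨x, hx⟩ := hAne t htI.1
    exact Set.disjoint_left.1 hB01 (htI.2 hx) (htJ.2 hx)
  -- key closedness argument
  have key : ∀ D D' : Set ℝ, Disjoint D D' → (∀ t ∈ Icc (0:ℝ) 1, B t ⊆ D ∨ B t ⊆ D') →
      IsClosed {t ∈ Icc (0:ℝ) 1 | A t ⊆ D} := by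
    intro D D' hDD' hor
    refine isClosed_of_closure_subset fun t ht => ?_
    set E : Set ℝ := {t ∈ Icc (0:ℝ) 1 | A t ⊆ D} with hE
    have htIcc : t ∈ Icc (0:ℝ) 1 :=
      isClosed_Icc.closure_subset (closure_mono (sep_subset _ _) ht)
    refine ⟨htIcc, fun x hx => ?_⟩
    -- x ∈ A t; show x ∈ D
    have husct := husc x (hKsub hx.1) (Y t) (hYC t htIcc) c' (lt_of_le_of_lt hx.2 hcc)
    have hYcont : ContinuousWithinAt Y (Icc (0:ℝ) 1) t := by
      exact Continuous.continuousWithinAt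
        (((continuous_const.sub continuous_id).mul continuous_const).add
          (continuous_id.mul continuous_const))
    have hYtend : Tendsto Y (𝓝[Icc (0:ℝ) 1] t) (𝓝[C] (Y t)) :=
      hYcont.tendsto_nhdsWithin (fun s hs => hYC s hs)
    have ev2 : ∀ᶠ s in 𝓝[Icc (0:ℝ) 1] t, f x (Y s) < c' := hYtend.eventually husct
    have hne : (𝓝[E] t).NeBot := mem_closure_iff_nhdsWithin_neBot.1 ht
    have ev3 : ∀ᶠ s in 𝓝[E] t, f x (Y s) < c' :=
      ev2.filter_mono (nhdsWithin_mono t fun s hs => hs.1)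
    obtain ⟨s, hs1, hs2⟩ := (ev3.and eventually_mem_nhdsWithin).exists
    have hxBs : x ∈ B s := ⟨hx.1, hs1.le⟩
    rcases hor s hs2.1 with h | h
    · exact h hxBs
    · obtain ⟨z, hz⟩ := hAne s hs2.1
      exact absurd (h (hAB s hz)) (fun hzD' => Set.disjoint_left.1 hDD' (hs2.2 hz) hzD')
  have hIcl : IsClosed I := key (B 0) (B 1) hB01 hBor
  have hJcl : IsClosed J := key (B 1) (B 0) hB01.symm (fun t ht => (hBor t ht).symm)
  have h0I : (0:ℝ) ∈ I := ⟨by norm_num, fun x hx => ⟨hx.1, hx.2.trans hcc.le⟩⟩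
  have h1J : (1:ℝ) ∈ J := ⟨by norm_num, fun x hx => ⟨hx.1, hx.2.trans hcc.le⟩⟩
  have hpre := isPreconnected_Icc (a := (0:ℝ)) (b := 1)
  obtain ⟨t, htIcc, htI, htJ⟩ := hpre Iᶜ Jᶜ hIcl.isOpen_compl hJcl.isOpen_compl
    (fun t ht => by
      by_cases h : t ∈ I
      · exact Or.inr fun hj => hIJdisj t h hj
      · exact Or.inl h)
    ⟨1, by norm_num, fun h => hIJdisj 1 h h1J⟩
    ⟨0, by norm_num, fun h => hIJdisj 0 h0I h⟩
  rcases hIJcover t htIcc with h | h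
  · exact htI h
  · exact htJ h

lemma sion_lem2 (a b : ℝ) (C : Set ℝ) (hC : Convex ℝ C) (f : ℝ → ℝ → ℝ)
    (hconv : ∀ y ∈ C, ConvexOn ℝ (Set.Icc a b) (fun x => f x y))
    (hlsc : ∀ y ∈ C, LowerSemicontinuousOn (fun x => f x y) (Set.Icc a b))
    (hconc : ∀ x ∈ Set.Icc a b, ConcaveOn ℝ C (f x))
    (husc : ∀ x ∈ Set.Icc a b, UpperSemicontinuousOn (f x) C) :
    ∀ n : ℕ, ∀ l : List ℝ, l.length ≤ n → (∀ y ∈ l, y ∈ C) →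
    ∀ a' b', a ≤ a' → b' ≤ b → a' ≤ b' → ∀ c : ℝ,
    (∀ x ∈ Icc a' b', ∃ y ∈ l, c < f x y) → ∃ y ∈ C, ∀ x ∈ Icc a' b', c < f x y := by
  intro n
  induction n with
  | zero =>
    intro l hlen _ a' b' _ _ hab' c hcov
    rw [Nat.le_zero, List.length_eq_zero_iff] at hlen
    subst hlen
    obtain ⟨y, hy, -⟩ := hcov a' (left_mem_Icc.2 hab')
    exact absurd hy List.not_mem_nil
  | succ n ih =>
    intro l hlen hlC a' b' ha' hb' hab' c hcov
    have hKsub : Icc a' b' ⊆ Icc a b := Icc_subset_Icc ha' hb'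
    rcases l with - | ⟨z₀, l₂⟩
    · obtain ⟨y, hy, -⟩ := hcov a' (left_mem_Icc.2 hab')
      exact absurd hy List.not_mem_nil
    rcases l₂ with - | ⟨z₁, rest⟩
    · refine ⟨z₀, hlC z₀ (by simp), fun x hx => ?_⟩
      obtain ⟨y, hy, hfy⟩ := hcov x hx
      rw [List.mem_singleton] at hy
      rwa [hy] at hfy
    have hrest_len : rest.length + 1 ≤ n := by
      simp only [List.length_cons] at hlen
      omega
    set l' : List ℝ := z₀ :: z₁ :: rest with hl'
    -- uniformize the level using the attained minimum of the lsc max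
    set φ : ℝ → ℝ := fun x => ((l'.map (f x)).foldr max c) with hφ
    have hφlsc : LowerSemicontinuousOn φ (Icc a' b') :=
      sion_lsc_foldr f l' c fun y hy => (hlsc y (hlC y hy)).mono hKsub
    obtain ⟨x₀, hx₀, hx₀min⟩ := sion_lsc_attains isCompact_Icc (nonempty_Icc.2 hab') hφlsc
    have hφx₀ : c < φ x₀ := by
      obtain ⟨y, hy, hfy⟩ := hcov x₀ hx₀
      exact sion_lt_foldr.2 (Or.inr ⟨y, hy, hfy⟩)
    obtain ⟨c', hcc', hc'φ⟩ := exists_between hφx₀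
    have hbig' : ∀ x ∈ Icc a' b', ∃ y ∈ l', c' < f x y := by
      intro x hx
      have hlt : c' < φ x := lt_of_lt_of_le hc'φ (hx₀min x hx)
      rcases sion_lt_foldr.1 hlt with h | h
      · exact absurd h (not_lt.2 hcc'.le)
      · exact h
    set X : Set ℝ := {x ∈ Icc a' b' | ∀ y ∈ rest, f x y ≤ c'} with hX
    have hrestC : ∀ y ∈ rest, y ∈ C := fun y hy => hlC y (by simp [hl', hy])
    rcases eq_empty_or_nonempty X with hXe | hXne
    · -- every point is handled by `rest`
      refine ih rest (hrest_len.trans (Nat.le_succ n) |>.trans (le_refl _) |> fun h => by omega)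
        hrestC a' b' ha' hb' hab' c fun x hx => ?_
      have hxX : x ∉ X := by rw [hXe]; exact notMem_empty x
      rw [hX, mem_setOf_eq] at hxX
      push_neg at hxX
      obtain ⟨y, hy, hfy⟩ := hxX hx
      exact ⟨y, hy, hcc'.trans hfy⟩
    · have hXcl : IsClosed X := by
        have hXeq' : X = Icc a' b' ∩ ⋂ (y : {y // y ∈ rest}), {x ∈ Icc a' b' | f x y.1 ≤ c'} := by
          ext x
          simp only [hX, mem_setOf_eq, mem_inter_iff, mem_iInter, Subtype.forall]
          exact ⟨fun ⟨h1, h2⟩ => ⟨h1, fun y hy => ⟨h1, h2 y hy⟩⟩,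
            fun ⟨h1, h2⟩ => ⟨h1, fun y hy => (h2 y hy).2⟩⟩
        rw [hXeq']
        exact isClosed_Icc.inter (isClosed_iInter fun y =>
          sion_sublevel_closed isClosed_Icc ((hlsc y.1 (hrestC y.1 y.2)).mono hKsub) c')
      have hXcv : Convex ℝ X := by
        have hXeq' : X = Icc a' b' ∩ ⋂ (y : {y // y ∈ rest}), {x ∈ Icc a' b' | f x y.1 ≤ c'} := by
          ext x
          simp only [hX, mem_setOf_eq, mem_inter_iff, mem_iInter, Subtype.forall]
          exact ⟨fun ⟨h1, h2⟩ => ⟨h1, fun y hy => ⟨h1, h2 y hy⟩⟩,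
            fun ⟨h1, h2⟩ => ⟨h1, fun y hy => (h2 y hy).2⟩⟩
        rw [hXeq']
        exact (convex_Icc a' b').inter (convex_iInter fun y =>
          ((hconv y.1 (hrestC y.1 y.2)).subset hKsub (convex_Icc a' b')).convex_le c')
      have hXsub : X ⊆ Icc a' b' := sep_subset _ _
      have hXcpt : IsCompact X := isCompact_Icc.of_isClosed_subset hXcl hXsub
      have hXeq : X = Icc (sInf X) (sSup X) :=
        eq_Icc_of_connected_compact ⟨hXne, hXcv.isPreconnected⟩ hXcpt
      set a₂ := sInf X with ha₂d
      set b₂ := sSup X with hb₂d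
      have ha₂b₂ : a₂ ≤ b₂ := by
        obtain ⟨x, hx⟩ := hXne
        rw [hXeq] at hx
        exact hx.1.trans hx.2
      have ha₂m : a₂ ∈ Icc a' b' := hXsub (by rw [hXeq]; exact left_mem_Icc.2 ha₂b₂)
      have hb₂m : b₂ ∈ Icc a' b' := hXsub (by rw [hXeq]; exact right_mem_Icc.2 ha₂b₂)
      have hbig2 : ∀ x ∈ Icc a₂ b₂, c' < max (f x z₀) (f x z₁) := by
        intro x hx
        have hxX : x ∈ X := by rw [hXeq]; exact hx
        obtain ⟨y, hy, hfy⟩ := hbig' x (hXsub hxX)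
        rcases List.mem_cons.1 hy with rfl | hy₂
        · exact lt_max_of_lt_left hfy
        rcases List.mem_cons.1 hy₂ with rfl | hy₃
        · exact lt_max_of_lt_right hfy
        · exact absurd hfy (not_lt.2 (hxX.2 y hy₃))
      obtain ⟨y', hy'C, hy'⟩ := sion_lem1 a b C hC f hconv hlsc hconc husc a₂ b₂
        (ha'.trans ha₂m.1) (hb₂m.2.trans hb') ha₂b₂ z₀ z₁
        (hlC z₀ (by simp [hl'])) (hlC z₁ (by simp [hl'])) c c' hcc' hbig2
      refine ih (y' :: rest) (by simpa using hrest_len) ?_ a' b' ha' hb' hab' c ?_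
      · intro y hy
        rcases List.mem_cons.1 hy with rfl | hy₂
        · exact hy'C
        · exact hrestC y hy₂
      · intro x hx
        by_cases hxX : x ∈ X
        · refine ⟨y', List.mem_cons_self, hy' x ?_⟩
          rw [← hXeq]
          exact hxX
        · rw [hX, mem_setOf_eq] at hxX
          push_neg at hxX
          obtain ⟨y, hy, hfy⟩ := hxX hx
          exact ⟨y, List.mem_cons_of_mem _ hy, hcc'.trans hfy⟩

lemma sion_key (a b : ℝ) (hab : a ≤ b) (C : Set ℝ) (hC : Convex ℝ C) (f : ℝ → ℝ → ℝ)
    (hconv : ∀ y ∈ C, ConvexOn ℝ (Set.Icc a b) (fun x => f x y))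
    (hlsc : ∀ y ∈ C, LowerSemicontinuousOn (fun x => f x y) (Set.Icc a b))
    (hconc : ∀ x ∈ Set.Icc a b, ConcaveOn ℝ C (f x))
    (husc : ∀ x ∈ Set.Icc a b, UpperSemicontinuousOn (f x) C)
    (c : ℝ) (hc : ∀ y ∈ C, ∃ x ∈ Icc a b, f x y < c) :
    ∃ x ∈ Icc a b, ∀ y ∈ C, f x y ≤ c := by
  by_contra hcon
  push_neg at hcon
  choose Y hYC hYf using hcon
  have h2 : ∀ x (hx : x ∈ Icc a b), ∃ u : Set ℝ, IsOpen u ∧ x ∈ u ∧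
      ∀ z ∈ u ∩ Icc a b, c < f z (Y x hx) := by
    intro x hx
    have hev := (hlsc _ (hYC x hx)) x hx c (hYf x hx)
    rw [eventually_iff, mem_nhdsWithin] at hev
    obtain ⟨u, hu, hxu, hsub⟩ := hev
    exact ⟨u, hu, hxu, fun z hz => hsub hz⟩
  choose U hUopen hxU hUf using h2
  obtain ⟨t, ht⟩ := isCompact_Icc.elim_nhds_subcover' U
    (fun x hx => (hUopen x hx).mem_nhds (hxU x hx))
  set l : List ℝ := t.toList.map (fun p => Y p.1 p.2) with hl
  have hlC : ∀ y ∈ l, y ∈ C := by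
    intro y hy
    rw [hl, List.mem_map] at hy
    obtain ⟨p, -, rfl⟩ := hy
    exact hYC p.1 p.2
  have hcov : ∀ x ∈ Icc a b, ∃ y ∈ l, c < f x y := by
    intro x hx
    obtain ⟨p, hpt, hpU⟩ := Set.mem_iUnion₂.1 (ht hx)
    refine ⟨Y p.1 p.2, ?_, hUf p.1 p.2 x ⟨hpU, hx⟩⟩
    rw [hl, List.mem_map]
    exact ⟨p, (Finset.mem_toList).2 hpt, rfl⟩
  obtain ⟨y, hyC, hy⟩ := sion_lem2 a b C hC f hconv hlsc hconc husc l.length l le_rfl hlC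
    a b le_rfl le_rfl hab c hcov
  obtain ⟨x, hx, hfx⟩ := hc y hyC
  exact absurd hfx (not_lt.2 (hy x hx).le)

/-- Sion's minimax theorem, one-dimensional real case. -/
theorem stmt_9 (a b : ℝ) (hab : a ≤ b) (C : Set ℝ) (hC : Convex ℝ C)
    (hCne : C.Nonempty) (f : ℝ → ℝ → ℝ)
    (hconv : ∀ y ∈ C, ConvexOn ℝ (Set.Icc a b) (fun x => f x y))
    (hlsc : ∀ y ∈ C, LowerSemicontinuousOn (fun x => f x y) (Set.Icc a b))
    (hconc : ∀ x ∈ Set.Icc a b, ConcaveOn ℝ C (f x))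
    (husc : ∀ x ∈ Set.Icc a b, UpperSemicontinuousOn (f x) C) :
    (⨅ x : Set.Icc a b, ⨆ y : C, (f x y : EReal)) =
      (⨆ y : C, ⨅ x : Set.Icc a b, (f x y : EReal)) ∧
    ∃ x₀ ∈ Set.Icc a b, (⨆ y : C, (f x₀ y : EReal)) =
      ⨅ x : Set.Icc a b, ⨆ y : C, (f x y : EReal) := by
  haveI hKne : Nonempty (Set.Icc a b) := (nonempty_Icc.2 hab).to_subtype
  haveI : Nonempty C := hCne.to_subtype
  set m : EReal := ⨅ x : Set.Icc a b, ⨆ y : C, (f x y : EReal) with hm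
  set S : EReal := ⨆ y : C, ⨅ x : Set.Icc a b, (f x y : EReal) with hS
  have heasy : S ≤ m := iSup_iInf_le_iInf_iSup (fun (y : C) (x : Set.Icc a b) => (f x y : EReal))
  -- for any real c > S, there is x with all values ≤ c
  have hkey : ∀ c : ℝ, S < (c : EReal) → ∃ x ∈ Icc a b, ∀ y ∈ C, f x y ≤ c := by
    intro c hc
    refine sion_key a b hab C hC f hconv hlsc hconc husc c fun y hy => ?_
    have h1 : (⨅ x : Set.Icc a b, (f x y : EReal)) < (c : EReal) :=
      lt_of_le_of_lt (le_iSup (fun y : C => ⨅ x : Set.Icc a b, (f x (y : ℝ) : EReal)) ⟨y, hy⟩) hc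
    obtain ⟨x, hx⟩ := iInf_lt_iff.1 h1
    exact ⟨x.1, x.2, EReal.coe_lt_coe_iff.1 hx⟩
  have hhard : m ≤ S := by
    refine le_of_forall_gt_imp_ge_of_dense fun d hd => ?_
    rcases eq_top_or_lt_top d with rfl | hdt
    · exact le_top
    obtain ⟨c, hc1, hc2⟩ := EReal.exists_between_coe_real hd
    obtain ⟨x, hx, hfx⟩ := hkey c hc1
    calc m ≤ ⨆ y : C, (f x y : EReal) :=
          iInf_le (fun x : Set.Icc a b => ⨆ y : C, (f (x : ℝ) y : EReal)) ⟨x, hx⟩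
      _ ≤ (c : EReal) := iSup_le fun y => EReal.coe_le_coe_iff.2 (hfx y y.2)
      _ ≤ d := hc2.le
  have heq : m = S := le_antisymm hhard heasy
  refine ⟨heq, ?_⟩
  -- existence of a minimizer
  rcases eq_or_ne m ⊤ with hmt | hmt
  · refine ⟨a, left_mem_Icc.2 hab, ?_⟩
    have hall := iInf_eq_top.1 (hm.symm.trans hmt)
    rw [hall ⟨a, left_mem_Icc.2 hab⟩, hmt]
  · obtain ⟨cn, hcngt, hcndec, hcnle⟩ : ∃ cn : ℕ → ℝ, (∀ n, m < (cn n : EReal)) ∧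
        (∀ n, cn (n + 1) ≤ cn n) ∧ (∀ c : ℝ, m < (c : EReal) → ∃ n, cn n ≤ c) := by
      rcases eq_or_ne m ⊥ with hmb | hmb
      · refine ⟨fun n => -(n : ℝ), fun n => hmb ▸ EReal.bot_lt_coe _, fun n => by push_cast; linarith,
          fun c hc => ?_⟩
        obtain ⟨k, hk⟩ := exists_nat_ge (-c)
        exact ⟨k, show -(k:ℝ) ≤ c by linarith⟩
      · have hmr : m = ((m.toReal : ℝ) : EReal) := (EReal.coe_toReal hmt hmb).symm
        set r := m.toReal with hr
        refine ⟨fun n => r + 1 / (n + 1), fun n => ?_, fun n => ?_, fun c hc => ?_⟩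
        · rw [hmr]
          exact_mod_cast (lt_add_iff_pos_right r).2 (by positivity)
        · have h1 : (0:ℝ) < (n:ℝ) + 1 := by positivity
          have h2 : ((n:ℝ) + 1) ≤ ((n:ℝ) + 1 + 1) := by linarith
          have := one_div_le_one_div_of_le h1 h2
          push_cast
          linarith
        · rw [hmr] at hc
          have hrc : r < c := EReal.coe_lt_coe_iff.1 hc
          obtain ⟨n, hn⟩ := exists_nat_one_div_lt (sub_pos.2 hrc)
          exact ⟨n, by push_cast at hn ⊢; linarith⟩
    set Kn : ℕ → Set ℝ := fun n => {x ∈ Icc a b | ∀ y ∈ C, f x y ≤ cn n} with hKn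
    have hKn_ne : ∀ n, (Kn n).Nonempty := by
      intro n
      obtain ⟨x, hx, hfx⟩ := hkey (cn n) (lt_of_le_of_lt heasy (hcngt n))
      exact ⟨x, hx, hfx⟩
    have hKn_cl : ∀ n, IsClosed (Kn n) := by
      intro n
      have : Kn n = ⋂ (y : C), {x ∈ Icc a b | f x (y : ℝ) ≤ cn n} := by
        ext x
        simp only [hKn, mem_setOf_eq, mem_iInter, Subtype.forall]
        obtain ⟨y₀, hy₀⟩ := hCne
        exact ⟨fun ⟨h1, h2⟩ y hy => ⟨h1, h2 y hy⟩,
          fun h => ⟨(h y₀ hy₀).1, fun y hy => (h y hy).2⟩⟩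
      rw [this]
      exact isClosed_iInter fun y =>
        sion_sublevel_closed isClosed_Icc (hlsc y.1 y.2) (cn n)
    have hKn_cpt : ∀ n, IsCompact (Kn n) := fun n =>
      isCompact_Icc.of_isClosed_subset (hKn_cl n) (sep_subset _ _)
    have hKn_dec : ∀ n, Kn (n + 1) ⊆ Kn n := fun n x hx =>
      ⟨hx.1, fun y hy => (hx.2 y hy).trans (hcndec n)⟩
    obtain ⟨x₀, hx₀⟩ := IsCompact.nonempty_iInter_of_sequence_nonempty_isCompact_isClosed
      Kn hKn_dec hKn_ne (hKn_cpt 0) hKn_cl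
    have hx₀n : ∀ n, x₀ ∈ Kn n := fun n => mem_iInter.1 hx₀ n
    have hx₀K : x₀ ∈ Icc a b := (hx₀n 0).1
    refine ⟨x₀, hx₀K, le_antisymm ?_ ?_⟩
    · by_contra hlt
      rw [not_le] at hlt
      obtain ⟨c, hc1, hc2⟩ := EReal.exists_between_coe_real hlt
      obtain ⟨n, hn⟩ := hcnle c hc1
      have hle : (⨆ y : C, (f x₀ y : EReal)) ≤ (cn n : EReal) :=
        iSup_le fun y => EReal.coe_le_coe_iff.2 ((hx₀n n).2 y y.2)
      exact absurd (hle.trans (EReal.coe_le_coe_iff.2 hn)) (not_le.2 hc2)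
    · exact iInf_le (fun x : Set.Icc a b => ⨆ y : C, (f (x : ℝ) y : EReal)) ⟨x₀, hx₀K⟩
end

section
/- Laplace asymptotics at a nondegenerate interior maximum: Let v : [r,s] → ℝ be C² with a unique maximizer t₀ ∈ (r,s), v′(t₀) = 0, v″(t₀) < 0, and v(t) < v(t₀) for t ≠ t₀. Let ξ : [r,s] → ℝ be continuous with ξ(t₀) ≠ 0. Then ∫_r^s e^{n·v(t)} ξ(t) dt ∼ √(2π/(n·|v″(t₀)|)) · e^{n·v(t₀)} · ξ(t₀) as n → ∞, i.e. the ratio of the two sides tends to 1. -/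
open Set Filter MeasureTheory intervalIntegral

lemma aux_quad_ub {f : ℝ → ℝ} {a b t₀ c : ℝ} (ha : a ≤ t₀) (hb : t₀ ≤ b)
    (hd1 : ∀ t ∈ Set.Icc a b, DifferentiableAt ℝ f t)
    (hd2 : ∀ t ∈ Set.Icc a b, DifferentiableAt ℝ (deriv f) t)
    (h0 : deriv f t₀ = 0)
    (hc : ∀ t ∈ Set.Icc a b, deriv (deriv f) t ≤ c) :
    ∀ x ∈ Set.Icc a b, f x - f t₀ ≤ c / 2 * (x - t₀) ^ 2 := by
  set g : ℝ → ℝ := fun x => f x - c / 2 * (x - t₀) ^ 2 with hg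
  set φ : ℝ → ℝ := fun t => deriv f t - c * (t - t₀) with hφ
  have hq : ∀ t : ℝ, HasDerivAt (fun x => c / 2 * (x - t₀) ^ 2) (c * (t - t₀)) t := by
    intro t
    have h1 : HasDerivAt (fun x : ℝ => (x - t₀) ^ 2) (2 * (t - t₀) ^ 1 * 1) t := by
      exact (((hasDerivAt_id t).sub_const t₀)).pow 2
    have := h1.const_mul (c / 2)
    exact this.congr_deriv (by ring)
  have hg' : ∀ t ∈ Set.Icc a b, HasDerivAt g (φ t) t := by
    intro t ht
    exact ((hd1 t ht).hasDerivAt).sub (hq t)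
  have hφcont : ContinuousOn φ (Set.Icc a b) := by
    apply ContinuousOn.sub
    · exact fun t ht => ((hd2 t ht).continuousAt).continuousWithinAt
    · exact (continuous_const.mul (continuous_id.sub continuous_const)).continuousOn
  have hφanti : AntitoneOn φ (Set.Icc a b) := by
    apply antitoneOn_of_deriv_nonpos (convex_Icc a b) hφcont
    · intro t ht
      rw [interior_Icc] at ht
      exact (((hd2 t (Ioo_subset_Icc_self ht)).sub
        ((differentiable_const c).mul ((differentiable_id).sub_const t₀) t)).differentiableWithinAt)
    · intro t ht
      rw [interior_Icc] at ht
      have hd : HasDerivAt φ (deriv (deriv f) t - c) t := by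
        have h2 : HasDerivAt (fun x : ℝ => c * (x - t₀)) (c * 1) t :=
          ((hasDerivAt_id t).sub_const t₀).const_mul c
        have h3 := ((hd2 t (Ioo_subset_Icc_self ht)).hasDerivAt).sub h2
        rw [mul_one] at h3
        exact h3
      rw [hd.deriv]
      have := hc t (Ioo_subset_Icc_self ht)
      linarith
  have hφt₀ : φ t₀ = 0 := by simp [hφ, h0]
  have hgcont : ContinuousOn g (Set.Icc a b) :=
    fun t ht => ((hg' t ht).continuousAt).continuousWithinAt
  have key : ∀ x ∈ Set.Icc a b, g x ≤ g t₀ := by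
    intro x hx
    rcases le_total x t₀ with hxt | hxt
    · have hmono : MonotoneOn g (Set.Icc a t₀) := by
        apply monotoneOn_of_deriv_nonneg (convex_Icc a t₀)
          (hgcont.mono (Icc_subset_Icc_right hb))
        · intro t ht
          rw [interior_Icc] at ht
          exact (hg' t ⟨ht.1.le, ht.2.le.trans hb⟩).differentiableAt.differentiableWithinAt
        · intro t ht
          rw [interior_Icc] at ht
          have htm : t ∈ Set.Icc a b := ⟨ht.1.le, ht.2.le.trans hb⟩
          rw [(hg' t htm).deriv]
          have := hφanti htm ⟨ha, hb⟩ ht.2.le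
          linarith [hφt₀]
      exact hmono ⟨hx.1, hxt⟩ ⟨ha, le_refl t₀⟩ hxt
    · have hanti : AntitoneOn g (Set.Icc t₀ b) := by
        apply antitoneOn_of_deriv_nonpos (convex_Icc t₀ b)
          (hgcont.mono (Icc_subset_Icc_left ha))
        · intro t ht
          rw [interior_Icc] at ht
          exact (hg' t ⟨ha.trans ht.1.le, ht.2.le⟩).differentiableAt.differentiableWithinAt
        · intro t ht
          rw [interior_Icc] at ht
          have htm : t ∈ Set.Icc a b := ⟨ha.trans ht.1.le, ht.2.le⟩
          rw [(hg' t htm).deriv]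
          have := hφanti ⟨ha, hb⟩ htm ht.1.le
          linarith [hφt₀]
      exact hanti ⟨le_refl t₀, hb⟩ ⟨hxt, hx.2⟩ hxt
  intro x hx
  have h1 := key x hx
  simp only [hg] at h1
  nlinarith [sq_nonneg (x - t₀)]

lemma aux_quad_lb {f : ℝ → ℝ} {a b t₀ c : ℝ} (ha : a ≤ t₀) (hb : t₀ ≤ b)
    (hd1 : ∀ t ∈ Set.Icc a b, DifferentiableAt ℝ f t)
    (hd2 : ∀ t ∈ Set.Icc a b, DifferentiableAt ℝ (deriv f) t)
    (h0 : deriv f t₀ = 0)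
    (hc : ∀ t ∈ Set.Icc a b, c ≤ deriv (deriv f) t) :
    ∀ x ∈ Set.Icc a b, c / 2 * (x - t₀) ^ 2 ≤ f x - f t₀ := by
  have hneg : deriv (fun x => -f x) = fun x => -(deriv f x) := funext fun x => deriv.neg
  have key := aux_quad_ub (f := fun x => -f x) (c := -c) ha hb
    (fun t ht => (hd1 t ht).neg)
    (by intro t ht; rw [hneg]; exact (hd2 t ht).neg)
    (by rw [hneg]; simp [h0])
    (by intro t ht
        rw [hneg]
        have h2 : deriv (fun x => -(deriv f x)) t = -(deriv (deriv f) t) := deriv.neg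
        rw [h2]
        linarith [hc t ht])
  intro x hx
  have := key x hx
  simp only [neg_sub_neg] at this
  linarith

lemma aux_sqrt_exp_decay {m : ℝ} (hm : 0 < m) :
    Filter.Tendsto (fun n : ℕ => Real.sqrt n * Real.exp (-(n * m))) Filter.atTop (nhds 0) := by
  have h1 : Filter.Tendsto (fun x : ℝ => x ^ 1 * Real.exp (-x)) Filter.atTop (nhds 0) :=
    Real.tendsto_pow_mul_exp_neg_atTop_nhds_zero 1
  have h2 : Filter.Tendsto (fun n : ℕ => (n : ℝ) * m) Filter.atTop Filter.atTop :=
    (tendsto_natCast_atTop_atTop.atTop_mul_const hm)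
  have h3 : Filter.Tendsto (fun n : ℕ => ((n : ℝ) * m) * Real.exp (-((n : ℝ) * m)))
      Filter.atTop (nhds 0) := by
    simpa [Function.comp_def] using h1.comp h2
  have h4 : Filter.Tendsto (fun n : ℕ => (n : ℝ) * Real.exp (-((n : ℝ) * m)))
      Filter.atTop (nhds 0) := by
    have := h3.const_mul (1 / m)
    simp only [mul_zero] at this
    refine this.congr fun n => ?_
    field_simp
  refine squeeze_zero_norm' ?_ h4
  filter_upwards [Filter.eventually_ge_atTop 1] with n hn
  have hn1 : (1 : ℝ) ≤ (n : ℝ) := by exact_mod_cast hn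
  have hs : Real.sqrt n ≤ (n : ℝ) := by
    nlinarith [Real.sq_sqrt (by positivity : (0:ℝ) ≤ (n:ℝ)), Real.sqrt_nonneg (n:ℝ)]
  have hpos : 0 < Real.exp (-((n:ℝ) * m)) := Real.exp_pos _
  rw [Real.norm_eq_abs, abs_of_nonneg (by positivity)]
  nlinarith [Real.sqrt_nonneg (n:ℝ)]

lemma aux_sqrt_nat_atTop : Filter.Tendsto (fun n : ℕ => Real.sqrt n) Filter.atTop Filter.atTop := by
  rw [tendsto_atTop_atTop]
  intro b
  refine ⟨⌈b ^ 2⌉₊, fun n hn => ?_⟩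
  have h1 : b ^ 2 ≤ (n : ℝ) := le_trans (Nat.le_ceil _) (by exact_mod_cast hn)
  calc b ≤ |b| := le_abs_self b
    _ = Real.sqrt (b ^ 2) := (Real.sqrt_sq_eq_abs b).symm
    _ ≤ Real.sqrt n := Real.sqrt_le_sqrt h1

set_option maxHeartbeats 1000000 in
/-- Laplace asymptotics at a nondegenerate interior maximum. -/
theorem stmt_19 (r s t₀ : ℝ) (h0 : t₀ ∈ Set.Ioo r s)
    (v ξ : ℝ → ℝ)
    (hv : ContDiffOn ℝ 2 v (Set.Icc r s))
    (hv1 : deriv v t₀ = 0) (hv2 : deriv (deriv v) t₀ < 0)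
    (hmax : ∀ t ∈ Set.Icc r s, t ≠ t₀ → v t < v t₀)
    (hξ : ContinuousOn ξ (Set.Icc r s)) (hξ0 : ξ t₀ ≠ 0) :
    Filter.Tendsto (fun n : ℕ =>
      (∫ t in r..s, Real.exp (n * v t) * ξ t) /
        (Real.sqrt (2 * Real.pi / (n * |deriv (deriv v) t₀|)) *
          Real.exp (n * v t₀) * ξ t₀))
      Filter.atTop (nhds 1) := by
  obtain ⟨hrt, hts⟩ := h0
  set A := |deriv (deriv v) t₀| with hA
  have hApos : 0 < A := abs_pos.mpr (ne_of_lt hv2)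
  have hAval : deriv (deriv v) t₀ = -A := by rw [hA, abs_of_neg hv2, neg_neg]
  set w : ℝ → ℝ := fun t => v t - v t₀ with hw
  have hUopen : IsOpen (Set.Ioo r s) := isOpen_Ioo
  have hvU : ContDiffOn ℝ 2 v (Set.Ioo r s) := hv.mono Set.Ioo_subset_Icc_self
  have hder1 : ∀ t ∈ Set.Ioo r s, DifferentiableAt ℝ v t := fun t ht =>
    (hvU.differentiableOn (by norm_num)).differentiableAt (hUopen.mem_nhds ht)
  have hdv : ContDiffOn ℝ 1 (deriv v) (Set.Ioo r s) :=
    hvU.deriv_of_isOpen hUopen (by norm_num)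
  have hder2 : ∀ t ∈ Set.Ioo r s, DifferentiableAt ℝ (deriv v) t := fun t ht =>
    (hdv.differentiableOn (by norm_num)).differentiableAt (hUopen.mem_nhds ht)
  have hcont2 : ContinuousOn (deriv (deriv v)) (Set.Ioo r s) :=
    hdv.continuousOn_deriv_of_isOpen hUopen le_rfl
  -- key quadratic bounds
  have hK : ∀ ε > (0:ℝ), ∃ δ > (0:ℝ), Set.Icc (t₀ - δ) (t₀ + δ) ⊆ Set.Ioo r s ∧
      ∀ h : ℝ, |h| ≤ δ → |v (t₀ + h) - v t₀ + A / 2 * h ^ 2| ≤ ε / 2 * h ^ 2 := by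
    intro ε hε
    have hcA : ContinuousAt (deriv (deriv v)) t₀ :=
      hcont2.continuousAt (hUopen.mem_nhds ⟨hrt, hts⟩)
    have hev1 : ∀ᶠ t in nhds t₀, |deriv (deriv v) t - deriv (deriv v) t₀| < ε := by
      have := Metric.tendsto_nhds.mp hcA ε hε
      simpa [Real.dist_eq] using this
    have hev2 : ∀ᶠ t in nhds t₀, t ∈ Set.Ioo r s :=
      hUopen.mem_nhds ⟨hrt, hts⟩
    obtain ⟨δ', hδ'pos, hδ'⟩ := Metric.eventually_nhds_iff_ball.mp (hev1.and hev2)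
    set δ := δ' / 2 with hδdef
    have hδpos : 0 < δ := by positivity
    have hmem : ∀ t ∈ Set.Icc (t₀ - δ) (t₀ + δ),
        |deriv (deriv v) t - deriv (deriv v) t₀| < ε ∧ t ∈ Set.Ioo r s := by
      intro t ht
      apply hδ'
      rw [Metric.mem_ball, Real.dist_eq, abs_sub_lt_iff]
      have h1 := ht.1; have h2 := ht.2
      simp only [hδdef] at h1 h2
      constructor <;> linarith
    have hsub : Set.Icc (t₀ - δ) (t₀ + δ) ⊆ Set.Ioo r s := fun t ht => (hmem t ht).2
    have hd1' : ∀ t ∈ Set.Icc (t₀ - δ) (t₀ + δ), DifferentiableAt ℝ v t :=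
      fun t ht => hder1 t (hsub ht)
    have hd2' : ∀ t ∈ Set.Icc (t₀ - δ) (t₀ + δ), DifferentiableAt ℝ (deriv v) t :=
      fun t ht => hder2 t (hsub ht)
    have haL : t₀ - δ ≤ t₀ := by linarith
    have hbL : t₀ ≤ t₀ + δ := by linarith
    have hub := aux_quad_ub (c := -A + ε) haL hbL hd1' hd2' hv1 (by
      intro t ht
      have := (hmem t ht).1
      rw [hAval, abs_lt] at this
      linarith [this.2])
    have hlb := aux_quad_lb (c := -(A + ε)) haL hbL hd1' hd2' hv1 (by
      intro t ht
      have := (hmem t ht).1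
      rw [hAval, abs_lt] at this
      linarith [this.1])
    refine ⟨δ, hδpos, hsub, ?_⟩
    intro h hh
    have hx : t₀ + h ∈ Set.Icc (t₀ - δ) (t₀ + δ) := by
      rw [abs_le] at hh
      constructor <;> [linarith [hh.1]; linarith [hh.2]]
    have h1 := hub (t₀ + h) hx
    have h2 := hlb (t₀ + h) hx
    simp only [add_sub_cancel_left] at h1 h2
    rw [abs_le]
    constructor <;> nlinarith [sq_nonneg h]
  -- fixed δ₀
  obtain ⟨δ₀, hδ₀pos, hδ₀sub, hδ₀bd⟩ := hK (A / 2) (by positivity)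
  have hub₀ : ∀ h : ℝ, |h| ≤ δ₀ → v (t₀ + h) - v t₀ ≤ -(A / 4) * h ^ 2 := by
    intro h hh
    have := hδ₀bd h hh
    rw [abs_le] at this
    nlinarith [sq_nonneg h, this.2]
  -- bound on ξ
  obtain ⟨C, hC⟩ := isCompact_Icc.exists_bound_of_continuousOn hξ
  set M : ℝ := max C 1 with hM
  have hMpos : (0:ℝ) < M := lt_of_lt_of_le one_pos (le_max_right _ _)
  have hMb : ∀ t ∈ Set.Icc r s, |ξ t| ≤ M := fun t ht =>
    le_trans (hC t ht) (le_max_left _ _)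
  -- continuity of the integrands
  have hcw : ContinuousOn w (Set.Icc r s) := by
    simp only [hw]
    exact (hv.continuousOn).sub continuousOn_const
  have hInt : ∀ n : ℕ, ContinuousOn (fun t => Real.exp (n * w t) * ξ t) (Set.Icc r s) :=
    fun n => ((Real.continuous_exp.comp_continuousOn (continuousOn_const.mul hcw)).mul hξ)
  -- geometry
  have hrδ : r < t₀ - δ₀ := (hδ₀sub ⟨by linarith, by linarith⟩).1
  have hδs : t₀ + δ₀ < s := (hδ₀sub ⟨by linarith, by linarith⟩).2
  -- the rescaled family
  set F : ℕ → ℝ → ℝ := fun n u =>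
    (Set.Icc (-(δ₀ * Real.sqrt n)) (δ₀ * Real.sqrt n)).indicator
      (fun u => Real.exp (n * w (t₀ + u / Real.sqrt n)) * ξ (t₀ + u / Real.sqrt n)) u with hF
  have hmap : ∀ (n : ℕ), ∀ u ∈ Set.Icc (-(δ₀ * Real.sqrt n)) (δ₀ * Real.sqrt n),
      t₀ + u / Real.sqrt n ∈ Set.Icc r s ∧ |u / Real.sqrt n| ≤ δ₀ := by
    intro n u hu
    have hs0 : (0:ℝ) ≤ Real.sqrt n := Real.sqrt_nonneg _
    have habs : |u / Real.sqrt n| ≤ δ₀ := by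
      rcases eq_or_lt_of_le hs0 with h | h
      · rw [← h]
        simp [hδ₀pos.le]
      · rw [abs_div, abs_of_pos h, div_le_iff₀ h]
        rw [Set.mem_Icc] at hu
        rw [abs_le]
        constructor <;> linarith [hu.1, hu.2]
    refine ⟨?_, habs⟩
    have habs' := abs_le.mp habs
    exact Set.Ioo_subset_Icc_self (hδ₀sub (by
      rw [Set.mem_Icc]
      constructor <;> linarith [habs'.1, habs'.2]))
  have hmid0 : Filter.Tendsto (fun n : ℕ => ∫ u : ℝ, F n u) Filter.atTop
      (nhds (∫ u : ℝ, Real.exp (-(A / 2) * u ^ 2) * ξ t₀)) := by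
    apply MeasureTheory.tendsto_integral_filter_of_dominated_convergence
      (bound := fun u => M * Real.exp (-(A / 4) * u ^ 2))
    · -- measurability
      filter_upwards with n
      simp only [hF]
      rw [aestronglyMeasurable_indicator_iff measurableSet_Icc]
      apply ContinuousOn.aestronglyMeasurable ?_ measurableSet_Icc
      have haff : Continuous (fun u : ℝ => t₀ + u / Real.sqrt n) :=
        continuous_const.add (continuous_id.div_const _)
      have hm : Set.MapsTo (fun u : ℝ => t₀ + u / Real.sqrt n)
          (Set.Icc (-(δ₀ * Real.sqrt n)) (δ₀ * Real.sqrt n)) (Set.Icc r s) :=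
        fun u hu => (hmap n u hu).1
      exact ((Real.continuous_exp.comp_continuousOn
        (continuousOn_const.mul (hcw.comp haff.continuousOn hm))).mul
        (hξ.comp haff.continuousOn hm))
    · -- bound
      filter_upwards [Filter.eventually_ge_atTop 1] with n hn
      apply Filter.Eventually.of_forall
      intro u
      by_cases hu : u ∈ Set.Icc (-(δ₀ * Real.sqrt n)) (δ₀ * Real.sqrt n)
      · simp only [hF]
        rw [Set.indicator_of_mem hu]
        obtain ⟨ht, habs⟩ := hmap n u hu
        have hn1 : (1:ℝ) ≤ (n:ℝ) := by exact_mod_cast hn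
        have hsq : ((n:ℝ)) * (u / Real.sqrt n) ^ 2 = u ^ 2 := by
          rw [div_pow, Real.sq_sqrt (by positivity : (0:ℝ) ≤ (n:ℝ))]
          field_simp
        have hexp : (n:ℝ) * w (t₀ + u / Real.sqrt n) ≤ -(A/4) * u ^ 2 := by
          have h1 : w (t₀ + u / Real.sqrt n) ≤ -(A/4) * (u / Real.sqrt n) ^ 2 := by
            have := hub₀ (u / Real.sqrt n) habs
            simpa [hw] using this
          calc (n:ℝ) * w (t₀ + u / Real.sqrt n)
              ≤ (n:ℝ) * (-(A/4) * (u / Real.sqrt n) ^ 2) :=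
                mul_le_mul_of_nonneg_left h1 (by positivity)
            _ = -(A/4) * u ^ 2 := by rw [← hsq]; ring
        rw [Real.norm_eq_abs, abs_mul, Real.abs_exp]
        have hMξ := hMb _ ht
        have he := Real.exp_le_exp.mpr hexp
        nlinarith [Real.exp_pos ((n:ℝ) * w (t₀ + u / Real.sqrt n)),
          abs_nonneg (ξ (t₀ + u / Real.sqrt n)), Real.exp_pos (-(A/4) * u ^ 2)]
      · simp only [hF]
        rw [Set.indicator_of_notMem hu]
        simp only [norm_zero]
        positivity
    · exact (integrable_exp_neg_mul_sq (by positivity : (0:ℝ) < A/4)).const_mul M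
    · -- pointwise limit
      apply Filter.Eventually.of_forall
      intro u
      have hsn : Filter.Tendsto (fun n : ℕ => Real.sqrt n) Filter.atTop Filter.atTop :=
        aux_sqrt_nat_atTop
      have hdiv : Filter.Tendsto (fun n : ℕ => u / Real.sqrt n) Filter.atTop (nhds 0) :=
        Filter.Tendsto.div_atTop tendsto_const_nhds hsn
      have harg : Filter.Tendsto (fun n : ℕ => t₀ + u / Real.sqrt n) Filter.atTop (nhds t₀) := by
        have := (tendsto_const_nhds (x := t₀) (f := (Filter.atTop : Filter ℕ))).add hdiv
        simpa using this
      have hξc : ContinuousAt ξ t₀ := hξ.continuousAt (Icc_mem_nhds hrt hts)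
      have hξlim : Filter.Tendsto (fun n : ℕ => ξ (t₀ + u / Real.sqrt n)) Filter.atTop
          (nhds (ξ t₀)) := (hξc.tendsto).comp harg
      have hexp : Filter.Tendsto (fun n : ℕ => (n:ℝ) * w (t₀ + u / Real.sqrt n)) Filter.atTop
          (nhds (-(A/2) * u ^ 2)) := by
        rw [Metric.tendsto_atTop]
        intro ε' hε'
        have hεp : (0:ℝ) < ε' / (u ^ 2 + 1) := by positivity
        obtain ⟨δ, hδp, _, hδbd⟩ := hK (ε' / (u ^ 2 + 1)) hεp
        have hev : ∀ᶠ n : ℕ in Filter.atTop, |u / Real.sqrt n| < δ := by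
          have := hdiv (Metric.ball_mem_nhds 0 hδp)
          simpa [Real.dist_eq, abs_div] using this
        obtain ⟨N, hN⟩ := Filter.eventually_atTop.mp (hev.and (Filter.eventually_ge_atTop 1))
        refine ⟨N, fun n hn => ?_⟩
        obtain ⟨h1, h2⟩ := hN n hn
        have hn1 : (1:ℝ) ≤ (n:ℝ) := by exact_mod_cast h2
        have hb := hδbd (u / Real.sqrt n) h1.le
        have hsq : ((n:ℝ)) * (u / Real.sqrt n) ^ 2 = u ^ 2 := by
          rw [div_pow, Real.sq_sqrt (by positivity : (0:ℝ) ≤ (n:ℝ))]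
          field_simp
        rw [Real.dist_eq]
        have e1 : (n:ℝ) * w (t₀ + u / Real.sqrt n) - (-(A/2) * u ^ 2)
            = (n:ℝ) * (v (t₀ + u / Real.sqrt n) - v t₀ + A/2 * (u / Real.sqrt n) ^ 2) := by
          simp only [hw]
          rw [← hsq]; ring
        rw [e1, abs_mul, abs_of_nonneg (by positivity : (0:ℝ) ≤ (n:ℝ))]
        calc (n:ℝ) * |v (t₀ + u / Real.sqrt n) - v t₀ + A/2 * (u / Real.sqrt n) ^ 2|
            ≤ (n:ℝ) * (ε' / (u ^ 2 + 1) / 2 * (u / Real.sqrt n) ^ 2) :=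
              mul_le_mul_of_nonneg_left hb (by positivity)
          _ = ε' / (u ^ 2 + 1) / 2 * u ^ 2 := by rw [← hsq]; ring
          _ < ε' := by rw [div_div]; rw [div_mul_eq_mul_div, div_lt_iff₀ (by positivity)]; nlinarith [sq_nonneg u]
      have hev2 : (fun n : ℕ =>
          Real.exp (n * w (t₀ + u / Real.sqrt n)) * ξ (t₀ + u / Real.sqrt n)) =ᶠ[Filter.atTop]
          (fun n : ℕ => F n u) := by
        have hT : Filter.Tendsto (fun n : ℕ => δ₀ * Real.sqrt n) Filter.atTop Filter.atTop :=
          hsn.const_mul_atTop hδ₀pos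
        filter_upwards [hT.eventually_ge_atTop |u|] with n hn
        have habs := abs_le.mp hn
        simp only [hF]
        rw [Set.indicator_of_mem]
        rw [Set.mem_Icc]
        exact ⟨by linarith [habs.1], habs.2⟩
      refine Filter.Tendsto.congr' hev2 ?_
      exact ((Real.continuous_exp.tendsto _).comp hexp).mul hξlim
  -- value of the Gaussian integral
  have hgauss : (∫ u : ℝ, Real.exp (-(A / 2) * u ^ 2) * ξ t₀)
      = Real.sqrt (2 * Real.pi / A) * ξ t₀ := by
    rw [MeasureTheory.integral_mul_const, integral_gaussian]
    congr 2
    rw [div_div_eq_mul_div, mul_comm]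
  -- change of variables identity
  have hchg : ∀ n : ℕ, 1 ≤ n → (∫ u : ℝ, F n u)
      = Real.sqrt n * ∫ t in (t₀ - δ₀)..(t₀ + δ₀), Real.exp (n * w t) * ξ t := by
    intro n hn
    have hn1 : (1:ℝ) ≤ (n:ℝ) := by exact_mod_cast hn
    have hsp : (0:ℝ) < Real.sqrt n := Real.sqrt_pos.mpr (by linarith)
    have hle : -(δ₀ * Real.sqrt n) ≤ δ₀ * Real.sqrt n := by nlinarith
    simp only [hF]
    rw [MeasureTheory.integral_indicator measurableSet_Icc,
      MeasureTheory.integral_Icc_eq_integral_Ioc,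
      ← intervalIntegral.integral_of_le hle]
    have h1 := intervalIntegral.integral_comp_div
      (a := -(δ₀ * Real.sqrt n)) (b := δ₀ * Real.sqrt n)
      (fun x => Real.exp (n * w (t₀ + x)) * ξ (t₀ + x)) hsp.ne'
    have hcancel : δ₀ * Real.sqrt n / Real.sqrt n = δ₀ := by field_simp
    have hcancel' : -(δ₀ * Real.sqrt n) / Real.sqrt n = -δ₀ := by
      rw [neg_div, hcancel]
    rw [hcancel, hcancel'] at h1
    have h2 := intervalIntegral.integral_comp_add_left
      (a := -δ₀) (b := δ₀) (fun t => Real.exp (n * w t) * ξ t) t₀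
    have h3 : t₀ + -δ₀ = t₀ - δ₀ := by ring
    rw [h3] at h2
    rw [h1, smul_eq_mul, h2]
  -- middle limit
  have hmid : Filter.Tendsto
      (fun n : ℕ => Real.sqrt n * ∫ t in (t₀ - δ₀)..(t₀ + δ₀), Real.exp (n * w t) * ξ t)
      Filter.atTop (nhds (Real.sqrt (2 * Real.pi / A) * ξ t₀)) := by
    rw [← hgauss]
    refine Filter.Tendsto.congr' ?_ hmid0
    filter_upwards [Filter.eventually_ge_atTop 1] with n hn
    exact hchg n hn
  -- tails
  have htail : ∀ a b : ℝ, r ≤ a → b ≤ s → a ≤ b → t₀ ∉ Set.Icc a b →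
      Filter.Tendsto (fun n : ℕ => Real.sqrt n * ∫ t in a..b, Real.exp (n * w t) * ξ t)
        Filter.atTop (nhds 0) := by
    intro a b hra hbs hab hnot
    have hsub : Set.Icc a b ⊆ Set.Icc r s := Set.Icc_subset_Icc hra hbs
    obtain ⟨y, hy, hymax⟩ := isCompact_Icc.exists_isMaxOn (Set.nonempty_Icc.mpr hab)
      (hv.continuousOn.mono hsub)
    have hym : v y < v t₀ := hmax y (hsub hy) (by rintro rfl; exact hnot hy)
    set m := v t₀ - v y with hm
    have hmpos : 0 < m := by simp only [hm]; linarith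
    have hwle : ∀ t ∈ Set.Icc a b, w t ≤ -m := by
      intro t ht
      have h1 : v t ≤ v y := (isMaxOn_iff.mp hymax) t ht
      simp only [hw, hm]
      linarith
    have hg : Filter.Tendsto
        (fun n : ℕ => (M * |b - a|) * (Real.sqrt n * Real.exp (-((n:ℝ) * m))))
        Filter.atTop (nhds 0) := by
      have := (aux_sqrt_exp_decay hmpos).const_mul (M * |b - a|)
      simpa using this
    apply squeeze_zero_norm' ?_ hg
    apply Filter.Eventually.of_forall
    intro n
    have hbd : ∀ x ∈ Set.uIoc a b, ‖Real.exp (n * w x) * ξ x‖ ≤ M * Real.exp (-((n:ℝ) * m)) := by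
      intro x hx
      have hx' : x ∈ Set.Icc a b := by
        rw [Set.uIoc_of_le hab] at hx
        exact ⟨hx.1.le, hx.2⟩
      have h1 : (n:ℝ) * w x ≤ -((n:ℝ) * m) := by
        have h2 := hwle x hx'
        have hn0 : (0:ℝ) ≤ (n:ℝ) := Nat.cast_nonneg n
        nlinarith
      have h2 := Real.exp_le_exp.mpr h1
      have h3 := hMb x (hsub hx')
      rw [Real.norm_eq_abs, abs_mul, Real.abs_exp]
      nlinarith [Real.exp_pos ((n:ℝ) * w x), abs_nonneg (ξ x), Real.exp_pos (-((n:ℝ) * m))]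
    have h4 := intervalIntegral.norm_integral_le_of_norm_le_const hbd
    rw [norm_mul, Real.norm_eq_abs (Real.sqrt n), abs_of_nonneg (Real.sqrt_nonneg _)]
    calc Real.sqrt n * ‖∫ t in a..b, Real.exp (n * w t) * ξ t‖
        ≤ Real.sqrt n * (M * Real.exp (-((n:ℝ) * m)) * |b - a|) :=
          mul_le_mul_of_nonneg_left h4 (Real.sqrt_nonneg _)
      _ = M * |b - a| * (Real.sqrt n * Real.exp (-((n:ℝ) * m))) := by ring
  -- integrability and splitting
  have hInt' : ∀ (n : ℕ) (a b : ℝ), r ≤ a → b ≤ s → a ≤ b →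
      IntervalIntegrable (fun t => Real.exp (n * w t) * ξ t) MeasureTheory.volume a b := by
    intro n a b hra hbs hab
    apply ContinuousOn.intervalIntegrable
    apply (hInt n).mono
    rw [Set.uIcc_of_le hab]
    exact Set.Icc_subset_Icc hra hbs
  have hsplit : ∀ n : ℕ, (∫ t in r..s, Real.exp (n * w t) * ξ t)
      = (∫ t in r..(t₀ - δ₀), Real.exp (n * w t) * ξ t)
        + (∫ t in (t₀ - δ₀)..(t₀ + δ₀), Real.exp (n * w t) * ξ t)
        + (∫ t in (t₀ + δ₀)..s, Real.exp (n * w t) * ξ t) := by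
    intro n
    rw [intervalIntegral.integral_add_adjacent_intervals
        (hInt' n r (t₀ - δ₀) le_rfl (by linarith) (by linarith))
        (hInt' n (t₀ - δ₀) (t₀ + δ₀) (by linarith) (by linarith) (by linarith)),
      intervalIntegral.integral_add_adjacent_intervals
        (hInt' n r (t₀ + δ₀) le_rfl (by linarith) (by linarith))
        (hInt' n (t₀ + δ₀) s (by linarith) le_rfl (by linarith))]
  have hT : Filter.Tendsto (fun n : ℕ => Real.sqrt n * ∫ t in r..s, Real.exp (n * w t) * ξ t)
      Filter.atTop (nhds (Real.sqrt (2 * Real.pi / A) * ξ t₀)) := by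
    have h1 := htail r (t₀ - δ₀) le_rfl (by linarith) (by linarith)
      (by rw [Set.mem_Icc]; push_neg; intro; linarith)
    have h2 := htail (t₀ + δ₀) s (by linarith) le_rfl (by linarith)
      (by rw [Set.mem_Icc]; push_neg; intro h; linarith)
    have h3 := (h1.add hmid).add h2
    rw [zero_add, add_zero] at h3
    refine Filter.Tendsto.congr (fun n => ?_) h3
    rw [hsplit n]
    ring
  -- final algebra
  have hQpos : (0:ℝ) < 2 * Real.pi / A := by positivity
  have hQne : Real.sqrt (2 * Real.pi / A) ≠ 0 := (Real.sqrt_pos.mpr hQpos).ne'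
  have hLne : Real.sqrt (2 * Real.pi / A) * ξ t₀ ≠ 0 := mul_ne_zero hQne hξ0
  have hfin := hT.div_const (Real.sqrt (2 * Real.pi / A) * ξ t₀)
  rw [div_self hLne] at hfin
  refine Filter.Tendsto.congr' ?_ hfin
  filter_upwards [Filter.eventually_ge_atTop 1] with n hn
  have hn1 : (1:ℝ) ≤ (n:ℝ) := by exact_mod_cast hn
  have hsp : (0:ℝ) < Real.sqrt n := Real.sqrt_pos.mpr (by linarith)
  have hnum : (∫ t in r..s, Real.exp (n * v t) * ξ t)
      = Real.exp (n * v t₀) * ∫ t in r..s, Real.exp (n * w t) * ξ t := by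
    rw [← intervalIntegral.integral_const_mul]
    apply intervalIntegral.integral_congr
    intro t ht
    simp only [hw]
    have harg : (n:ℝ) * v t = (n:ℝ) * v t₀ + (n:ℝ) * (v t - v t₀) := by ring
    rw [harg, Real.exp_add]
    ring
  have hsq2 : Real.sqrt (2 * Real.pi / ((n:ℝ) * A)) = Real.sqrt (2 * Real.pi / A) / Real.sqrt n := by
    rw [← Real.sqrt_div (by positivity : (0:ℝ) ≤ 2 * Real.pi / A)]
    congr 1
    field_simp
  rw [hnum, hsq2]
  have hexpne := Real.exp_ne_zero ((n:ℝ) * v t₀)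
  field_simp
end
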